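/- LPO and LLPO are *-irreducible with respect to continuous Weihrauch degrees: if f and g are problems with LPO ≡*_W f * g, then LPO ≡*_W f or LPO ≡*_W g; likewise, if LLPO ≡*_W f * g, then LLPO ≡*_W f or LLPO ≡*_W g. -/

import Mathlib

/-- Baire space. -/
abbrev Baire := ℕ → ℕ

/-- A problem: a partial multivalued function on Baire space, given as the
solution-set map; the domain is the set of instances with nonempty solution set. -/
def Problem := Baire → Set Baire

/-- Domain of a problem. -/
def Dom (f : Problem) : Set Baire := {x | (f x).Nonempty}

/-- A standard computable pairing of two sequences (interleaving). -/
def pair (x y : Baire) : Baire := fun n => if n % 2 = 0 then x (n / 2) else y (n / 2)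

/-- Initial segment of length `m` of a sequence. -/
def initSeg (x : Baire) (m : ℕ) : List ℕ := (List.range m).map x

/-- `F` is (the restriction to `D` of) a partial computable function on Baire space:
there is a computable monotone oracle functional computing `F x` from prefixes of `x`,
correctly and consistently, for every `x ∈ D`. -/
def ComputableOn (F : Baire → Baire) (D : Set Baire) : Prop :=
  ∃ φ : List ℕ → ℕ → Option ℕ, Computable₂ φ ∧
    ∀ x ∈ D, ∀ n : ℕ,
      (∃ m, φ (initSeg x m) n = some (F x n)) ∧
      (∀ m v, φ (initSeg x m) n = some v → v = F x n)

/-- Weihrauch reducibility `f ≤_W g`, with the partial computable forward functional `k`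
defined on `Dom f` and the partial computable backward functional `h` defined on all
pairs `⟨x, y⟩` with `x ∈ Dom f` and `y` a `g`-solution of `k x`. -/
def WRed (f g : Problem) : Prop :=
  ∃ h k : Baire → Baire,
    ComputableOn k (Dom f) ∧
    ComputableOn h {p | ∃ x ∈ Dom f, ∃ y ∈ g (k x), p = pair x y} ∧
    ∀ x ∈ Dom f, k x ∈ Dom g ∧ ∀ y ∈ g (k x), h (pair x y) ∈ f x

/-- Weihrauch equivalence. -/
def WEquiv (f g : Problem) : Prop := WRed f g ∧ WRed g f

/-- Continuous Weihrauch reducibility `f ≤*_W g`: as `WRed` but the functionals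
need only be partial continuous (continuous on their domains, Baire space carrying
the product topology). -/
def ContWRed (f g : Problem) : Prop :=
  ∃ h k : Baire → Baire,
    ContinuousOn k (Dom f) ∧
    ContinuousOn h {p | ∃ x ∈ Dom f, ∃ y ∈ g (k x), p = pair x y} ∧
    ∀ x ∈ Dom f, k x ∈ Dom g ∧ ∀ y ∈ g (k x), h (pair x y) ∈ f x

/-- Continuous Weihrauch equivalence. -/
def ContWEquiv (f g : Problem) : Prop := ContWRed f g ∧ ContWRed g f

/-- Composition of problems: `dom (f ∘ g) = {x ∈ dom g : g x ⊆ dom f}` and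
`(f ∘ g) x = {z : ∃ y ∈ g x, z ∈ f y}`. -/
def pcomp (f g : Problem) : Problem :=
  fun x => {z | g x ⊆ Dom f ∧ ∃ y ∈ g x, z ∈ f y}

/-- The identity problem. -/
def idp : Problem := fun x => {x}

/-- `p` is (a representative of) the compositional product `f * g`: the maximum,
with respect to `≤_W`, of `{f' ∘ g' : f' ≤_W f, g' ≤_W g}`. -/
def IsCompProd (f g p : Problem) : Prop :=
  (∃ f' g', WRed f' f ∧ WRed g' g ∧ WEquiv p (pcomp f' g')) ∧
  (∀ f' g', WRed f' f → WRed g' g → WRed (pcomp f' g') p)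

/-- `IsIter f n p` : `p` is (a representative of) `f^[n]`, the compositional product of
`n` copies of `f`, with `f^[0] := id`. -/
def IsIter (f : Problem) : ℕ → Problem → Prop
  | 0, p => p = idp
  | n + 1, p => ∃ q, IsIter f n q ∧ IsCompProd f q p

/-- The constant sequence with value `n`. -/
def cseq (n : ℕ) : Baire := fun _ => n

/-- The limited principle of omniscience. -/
def LPO : Problem := fun x =>
  {y | ((∃ n, x n = 0) ∧ y = cseq 0) ∨ ((∀ n, x n ≠ 0) ∧ y = cseq 1)}

/-- The lesser limited principle of omniscience. -/
def LLPO : Problem := fun x =>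
  {y | (∀ i j, x i ≠ 0 → x j ≠ 0 → i = j) ∧
       ((y = cseq 0 ∧ ∀ i, Even i → x i = 0) ∨
        (y = cseq 1 ∧ ∀ i, Odd i → x i = 0))}

/-- Turing reducibility between points of Baire space: `x` is computable from
oracle `y`. -/
def TuringLE (x y : Baire) : Prop :=
  ∃ φ : List ℕ → ℕ → Option ℕ, Computable₂ φ ∧
    ∀ n : ℕ, (∃ m, φ (initSeg y m) n = some (x n)) ∧
      (∀ m v, φ (initSeg y m) n = some v → v = x n)

/-- Mutual Turing reducibility: `x` and `y` have the same Turing degree. -/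
def TuringEquiv (x y : Baire) : Prop := TuringLE x y ∧ TuringLE y x

/-- Strict Turing reducibility. -/
def TuringLT (x y : Baire) : Prop := TuringLE x y ∧ ¬ TuringLE y x

/-- The problem `w_a`, for `a` a representative of a (non-zero) Turing degree. -/
def w (a : Baire) : Problem := fun x =>
  {y | (Computable x ∧ ¬ Computable y) ∨ (¬ Computable x ∧ TuringEquiv y a)}

/-- `k`-weak continuity of a problem. -/
def WeaklyContinuous (k : ℕ) (f : Problem) : Prop :=
  ∀ x ∈ Dom f, ∀ y : ℕ → Baire, (∀ n, y n ∈ Dom f) →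
    Filter.Tendsto y Filter.atTop (nhds x) →
    ∃ u ∈ f x, ∀ l < k, ∀ m : ℕ, ∃ n ≥ m,
      ∃ v ∈ f (y (n * k + l)), initSeg u m = initSeg v m

/-- Product of two problems. -/
def prodP (f g : Problem) : Problem := fun z =>
  {w | ∃ x y u v, z = pair x y ∧ w = pair u v ∧ u ∈ f x ∧ v ∈ g y}

/-- `powP f n` : the product of `n` copies of `f` (for `n ≥ 1`). -/
def powP (f : Problem) : ℕ → Problem
  | 0 => idp
  | 1 => f
  | n + 2 => prodP f (powP f (n + 1))

/-- A problem `f` is `k`-continuous: it has a realizer `r` (defined on a domain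
`D ⊇ Dom f`) together with a partition of `D` into at most `k` pieces (given by a
coloring `c`) such that `r` is continuous on each piece. -/
def kContinuous (k : ℕ) (f : Problem) : Prop :=
  ∃ (D : Set Baire) (r : Baire → Baire) (c : Baire → Fin k),
    Dom f ⊆ D ∧ (∀ x ∈ Dom f, r x ∈ f x) ∧
    ∀ i : Fin k, ContinuousOn r {x ∈ D | c x = i}

/-! ### Infrastructure -/

section Infra

open Set Filter Topology

/-- Cylinder around `x` of precision `n`. -/
def Cyl (x : Baire) (n : ℕ) : Set Baire := {y | ∀ i < n, y i = x i}

lemma initSeg_eq_iff {x y : Baire} {m : ℕ} :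
    initSeg x m = initSeg y m ↔ ∀ i < m, x i = y i := by
  simp only [initSeg, List.map_eq_map_iff, List.mem_range]

lemma initSeg_eq_of_le {x y : Baire} {m n : ℕ} (h : initSeg x n = initSeg y n)
    (hmn : m ≤ n) : initSeg x m = initSeg y m := by
  rw [initSeg_eq_iff] at h ⊢
  exact fun i hi => h i (lt_of_lt_of_le hi hmn)

lemma isOpen_cyl (x : Baire) (n : ℕ) : IsOpen (Cyl x n) := by
  have : Cyl x n = ⋂ i ∈ Finset.range n, ((fun y : Baire => y i) ⁻¹' {x i}) := by
    ext y; simp [Cyl, Finset.mem_range]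
  rw [this]
  exact isOpen_biInter_finset fun i _ =>
    (continuous_apply i).isOpen_preimage _ (isOpen_discrete _)

lemma mem_cyl_self (x : Baire) (n : ℕ) : x ∈ Cyl x n := fun _ _ => rfl

lemma cyl_mem_nhds (x : Baire) (n : ℕ) : Cyl x n ∈ 𝓝 x :=
  (isOpen_cyl x n).mem_nhds (mem_cyl_self x n)

lemma exists_cyl_subset {x : Baire} {U : Set Baire} (hU : U ∈ 𝓝 x) :
    ∃ n, Cyl x n ⊆ U := by
  obtain ⟨V, hVU, hV, hxV⟩ := mem_nhds_iff.1 hU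
  obtain ⟨I, u, hIu, hpi⟩ := isOpen_pi_iff.1 hV x hxV
  refine ⟨I.sup (· + 1), fun y hy => hVU (hpi ?_)⟩
  intro a ha
  have h1 : a + 1 ≤ I.sup (· + 1) := Finset.le_sup (f := (· + 1)) ha
  have : y a = x a := hy a (lt_of_lt_of_le (Nat.lt_succ_self a) h1)
  rw [this]
  exact (hIu a ha).2

/-- Sufficient condition for continuity within a set, in terms of prefixes. -/
lemma continuousWithinAt_of_cyl {φ : Baire → Baire} {S : Set Baire} {x : Baire}
    (H : ∀ m, ∃ n, ∀ y ∈ S, (∀ i < n, y i = x i) → ∀ i < m, φ y i = φ x i) :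
    ContinuousWithinAt φ S x := by
  intro V hV
  obtain ⟨m, hm⟩ := exists_cyl_subset hV
  obtain ⟨n, hn⟩ := H m
  have h1 : S ∩ Cyl x n ∈ 𝓝[S] x := inter_mem_nhdsWithin S (cyl_mem_nhds x n)
  rw [Filter.mem_map]
  refine Filter.mem_of_superset h1 ?_
  intro y hy
  exact hm fun i hi => hn y hy.1 hy.2 i hi

/-- Necessary condition: extract a modulus of continuity. -/
lemma continuousWithinAt_to_cyl {φ : Baire → Baire} {S : Set Baire} {x : Baire}
    (H : ContinuousWithinAt φ S x) :
    ∀ m, ∃ n, ∀ y ∈ S, (∀ i < n, y i = x i) → ∀ i < m, φ y i = φ x i := by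
  intro m
  have h1 : φ ⁻¹' (Cyl (φ x) m) ∈ 𝓝[S] x := H (cyl_mem_nhds (φ x) m)
  obtain ⟨U, hUopen, hxU, hsub⟩ := mem_nhdsWithin.1 h1
  obtain ⟨n, hn⟩ := exists_cyl_subset (hUopen.mem_nhds hxU)
  exact ⟨n, fun y hyS hy => hsub ⟨hn hy, hyS⟩⟩

end Infra
section Parts

open Set

/-- Even part of an interleaved pair. -/
def evenP (w : Baire) : Baire := fun n => w (2 * n)

/-- Odd part of an interleaved pair. -/
def oddP (w : Baire) : Baire := fun n => w (2 * n + 1)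

lemma pair_even (x y : Baire) (n : ℕ) : pair x y (2 * n) = x n := by
  simp [pair, Nat.mul_div_cancel_left, Nat.mul_mod_right]

lemma pair_odd (x y : Baire) (n : ℕ) : pair x y (2 * n + 1) = y n := by
  have h1 : (2 * n + 1) % 2 = 1 := by omega
  have h2 : (2 * n + 1) / 2 = n := by omega
  simp [pair, h1, h2]

lemma evenP_pair (x y : Baire) : evenP (pair x y) = x := by
  funext n; exact pair_even x y n

lemma oddP_pair (x y : Baire) : oddP (pair x y) = y := by
  funext n; exact pair_odd x y n

lemma continuous_reindex (r : ℕ → ℕ) : Continuous (fun w : Baire => fun n => w (r n)) :=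
  continuous_pi fun n => continuous_apply (r n)

lemma continuous_evenP : Continuous evenP := continuous_reindex fun n => 2 * n

lemma continuous_oddP : Continuous oddP := continuous_reindex fun n => 2 * n + 1

lemma continuousOn_pairMap {φ ψ : Baire → Baire} {s : Set Baire}
    (hφ : ContinuousOn φ s) (hψ : ContinuousOn ψ s) :
    ContinuousOn (fun w => pair (φ w) (ψ w)) s := by
  intro x hx
  rw [continuousWithinAt_pi]
  intro n
  by_cases h : n % 2 = 0
  · simp only [pair, h, if_true]
    exact ((continuous_apply (n / 2)).comp_continuousOn hφ) x hx
  · simp only [pair, h, if_false]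
    exact ((continuous_apply (n / 2)).comp_continuousOn hψ) x hx

lemma continuous_pairMap {φ ψ : Baire → Baire}
    (hφ : Continuous φ) (hψ : Continuous ψ) :
    Continuous (fun w => pair (φ w) (ψ w)) := by
  rw [← continuousOn_univ]
  exact continuousOn_pairMap hφ.continuousOn hψ.continuousOn

lemma initSeg_get {x : Baire} {m i : ℕ} (h : i < m) :
    (initSeg x m)[i]? = some (x i) := by
  rw [initSeg, List.getElem?_map, List.getElem?_range h]; rfl

lemma initSeg_get_none {x : Baire} {m i : ℕ} (h : ¬ i < m) :
    (initSeg x m)[i]? = none := by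
  have h2 : (List.range m)[i]? = none := List.getElem?_eq_none_iff.2 (by simpa using Nat.le_of_not_lt h)
  rw [initSeg, List.getElem?_map, h2]; rfl

/-- Any index-rearranging functional is computable on any domain. -/
lemma computableOn_reindex {r : ℕ → ℕ} (hr : Primrec r) (D : Set Baire) :
    ComputableOn (fun w : Baire => fun n => w (r n)) D := by
  refine ⟨fun σ n => σ[r n]?, ?_, ?_⟩
  · exact Primrec₂.to_comp (Primrec.list_getElem?.comp Primrec.fst (hr.comp Primrec.snd))
  · intro x _ n
    constructor
    · exact ⟨r n + 1, initSeg_get (Nat.lt_succ_self _)⟩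
    · intro m v hv
      have hv' : (initSeg x m)[r n]? = some v := hv
      by_cases h : r n < m
      · rw [initSeg_get h] at hv'; exact (Option.some_inj.1 hv').symm
      · rw [initSeg_get_none h] at hv'; exact absurd hv' (by simp)

lemma computableOn_evenP (D : Set Baire) : ComputableOn evenP D :=
  computableOn_reindex (Primrec.nat_double) D

lemma computableOn_oddP (D : Set Baire) : ComputableOn oddP D :=
  computableOn_reindex (Primrec.nat_double_succ) D

/-- A functional computable on `D` is continuous on `D`. -/
lemma ComputableOn.continuousOn {F : Baire → Baire} {D : Set Baire}
    (h : ComputableOn F D) : ContinuousOn F D := by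
  obtain ⟨φ, -, hφ⟩ := h
  intro x hx
  apply continuousWithinAt_of_cyl
  intro m
  choose mm hmm using fun i => (hφ x hx i).1
  refine ⟨(Finset.range m).sup mm, fun y hyD hy i hi => ?_⟩
  have hle : mm i ≤ (Finset.range m).sup mm := Finset.le_sup (Finset.mem_range.2 hi)
  have hseg : initSeg y (mm i) = initSeg x (mm i) := by
    rw [initSeg_eq_iff]
    exact fun j hj => hy j (lt_of_lt_of_le hj hle)
  have := (hφ y hyD i).2 (mm i) (F x i) (by rw [hseg]; exact hmm i)
  exact this.symm

lemma contWRed_of_wRed {f g : Problem} (h : WRed f g) : ContWRed f g := by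
  obtain ⟨h', k', hk, hh, hc⟩ := h
  exact ⟨h', k', hk.continuousOn, hh.continuousOn, hc⟩

lemma contWRed_trans {a b c : Problem} (h1 : ContWRed a b) (h2 : ContWRed b c) :
    ContWRed a c := by
  obtain ⟨h₁, k₁, hk₁, hh₁, hc₁⟩ := h1
  obtain ⟨h₂, k₂, hk₂, hh₂, hc₂⟩ := h2
  refine ⟨fun w => h₁ (pair (evenP w) (h₂ (pair (k₁ (evenP w)) (oddP w)))),
    fun x => k₂ (k₁ x), ?_, ?_, ?_⟩
  · exact hk₂.comp hk₁ fun x hx => (hc₁ x hx).1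
  · -- continuity of the composed backward map
    set Sac : Set Baire := {p | ∃ x ∈ Dom a, ∃ y ∈ c (k₂ (k₁ x)), p = pair x y} with hSac
    have hmem : ∀ w ∈ Sac, evenP w ∈ Dom a ∧ oddP w ∈ c (k₂ (k₁ (evenP w))) := by
      rintro w ⟨x, hx, z, hz, rfl⟩
      simp only [evenP_pair, oddP_pair]
      exact ⟨hx, hz⟩
    have hT₂ : ContinuousOn (fun w => pair (k₁ (evenP w)) (oddP w)) Sac := by
      apply continuousOn_pairMap
      · exact hk₁.comp continuous_evenP.continuousOn fun w hw => (hmem w hw).1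
      · exact continuous_oddP.continuousOn
    have hT₂maps : MapsTo (fun w => pair (k₁ (evenP w)) (oddP w)) Sac
        {p | ∃ x ∈ Dom b, ∃ y ∈ c (k₂ x), p = pair x y} := by
      rintro w ⟨x, hx, z, hz, rfl⟩
      simp only [evenP_pair, oddP_pair]
      exact ⟨k₁ x, (hc₁ x hx).1, z, hz, rfl⟩
    have hmid : ContinuousOn (fun w => h₂ (pair (k₁ (evenP w)) (oddP w))) Sac :=
      hh₂.comp hT₂ hT₂maps
    have hT₁ : ContinuousOn (fun w => pair (evenP w)
        (h₂ (pair (k₁ (evenP w)) (oddP w)))) Sac :=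
      continuousOn_pairMap continuous_evenP.continuousOn hmid
    have hT₁maps : MapsTo (fun w => pair (evenP w) (h₂ (pair (k₁ (evenP w)) (oddP w)))) Sac
        {p | ∃ x ∈ Dom a, ∃ y ∈ b (k₁ x), p = pair x y} := by
      rintro w ⟨x, hx, z, hz, rfl⟩
      simp only [evenP_pair, oddP_pair]
      exact ⟨x, hx, h₂ (pair (k₁ x) z), (hc₂ (k₁ x) (hc₁ x hx).1).2 z hz, rfl⟩
    exact hh₁.comp hT₁ hT₁maps
  · intro x hx
    refine ⟨(hc₂ (k₁ x) (hc₁ x hx).1).1, fun z hz => ?_⟩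
    simp only [evenP_pair, oddP_pair]
    exact (hc₁ x hx).2 _ ((hc₂ (k₁ x) (hc₁ x hx).1).2 z hz)

end Parts
section Values

open Set

lemma cseq_ne (a b : ℕ) (h : a ≠ b) : cseq a ≠ cseq b := by
  intro hc
  exact h (congrFun hc 0)

lemma lpo_total (x : Baire) : (LPO x).Nonempty := by
  by_cases h : ∃ n, x n = 0
  · exact ⟨cseq 0, Or.inl ⟨h, rfl⟩⟩
  · exact ⟨cseq 1, Or.inr ⟨fun n hn => h ⟨n, hn⟩, rfl⟩⟩

lemma dom_lpo : Dom LPO = Set.univ :=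
  Set.eq_univ_of_forall fun x => lpo_total x

lemma mem_dom_lpo (x : Baire) : x ∈ Dom LPO := lpo_total x

lemma lpo_eq_of_zero {x : Baire} {n : ℕ} (h : x n = 0) {y : Baire}
    (hy : y ∈ LPO x) : y = cseq 0 := by
  rcases hy with ⟨-, rfl⟩ | ⟨h1, -⟩
  · rfl
  · exact absurd h (h1 n)

lemma lpo_mem_of_zero {x : Baire} {n : ℕ} (h : x n = 0) : cseq 0 ∈ LPO x :=
  Or.inl ⟨⟨n, h⟩, rfl⟩

lemma lpo_eq_of_nozero {x : Baire} (h : ∀ n, x n ≠ 0) {y : Baire}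
    (hy : y ∈ LPO x) : y = cseq 1 := by
  rcases hy with ⟨⟨n, hn⟩, -⟩ | ⟨-, rfl⟩
  · exact absurd hn (h n)
  · rfl

lemma lpo_mem_of_nozero {x : Baire} (h : ∀ n, x n ≠ 0) : cseq 1 ∈ LPO x :=
  Or.inr ⟨h, rfl⟩

/-- At most one nonzero member, for instances in the domain of LLPO. -/
lemma llpo_amo {x : Baire} (hx : x ∈ Dom LLPO) :
    ∀ i j, x i ≠ 0 → x j ≠ 0 → i = j := by
  obtain ⟨y, hy, -⟩ := hx
  exact hy

lemma llpo_mem_zero {x : Baire} (h : ∀ n, x n = 0) :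
    cseq 0 ∈ LLPO x ∧ cseq 1 ∈ LLPO x := by
  constructor
  · exact ⟨fun i j hi _ => absurd (h i) hi, Or.inl ⟨rfl, fun i _ => h i⟩⟩
  · exact ⟨fun i j hi _ => absurd (h i) hi, Or.inr ⟨rfl, fun i _ => h i⟩⟩

lemma llpo_mem_even {x : Baire} (amo : ∀ i j, x i ≠ 0 → x j ≠ 0 → i = j)
    {n : ℕ} (hn : x n ≠ 0) (he : n % 2 = 0) : cseq 1 ∈ LLPO x := by
  refine ⟨amo, Or.inr ⟨rfl, fun i hi => ?_⟩⟩
  by_contra h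
  have := amo i n h hn
  subst this
  rw [Nat.odd_iff] at hi
  omega

lemma llpo_mem_odd {x : Baire} (amo : ∀ i j, x i ≠ 0 → x j ≠ 0 → i = j)
    {n : ℕ} (hn : x n ≠ 0) (he : n % 2 = 1) : cseq 0 ∈ LLPO x := by
  refine ⟨amo, Or.inl ⟨rfl, fun i hi => ?_⟩⟩
  by_contra h
  have := amo i n h hn
  subst this
  rw [Nat.even_iff] at hi
  omega

lemma llpo_mem_total {x : Baire} (hx : x ∈ Dom LLPO) {y : Baire} (hy : y ∈ LLPO x) :
    y = cseq 0 ∨ y = cseq 1 := by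
  rcases hy with ⟨-, ⟨rfl, -⟩ | ⟨rfl, -⟩⟩
  · exact Or.inl rfl
  · exact Or.inr rfl

lemma llpo_vals {x : Baire} {y : Baire} (hy : y ∈ LLPO x) :
    y = cseq 0 ∨ y = cseq 1 := by
  rcases hy with ⟨-, ⟨rfl, -⟩ | ⟨rfl, -⟩⟩
  · exact Or.inl rfl
  · exact Or.inr rfl

/-- The canonical LLPO test instance with a single 1 at position `i`. -/
def useq (i : ℕ) : Baire := fun n => if n = i then 1 else 0

lemma useq_amo (i : ℕ) : ∀ a b, useq i a ≠ 0 → useq i b ≠ 0 → a = b := by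
  intro a b ha hb
  simp only [useq] at ha hb
  by_cases h1 : a = i
  · by_cases h2 : b = i
    · rw [h1, h2]
    · simp [h2] at hb
  · simp [h1] at ha

lemma useq_mem_dom (i : ℕ) : useq i ∈ Dom LLPO := by
  have hne : useq i i ≠ 0 := by simp [useq]
  by_cases h : i % 2 = 0
  · exact ⟨cseq 1, llpo_mem_even (useq_amo i) hne h⟩
  · exact ⟨cseq 0, llpo_mem_odd (useq_amo i) hne (by omega)⟩

lemma cseq0_mem_dom : cseq 0 ∈ Dom LLPO :=
  ⟨cseq 0, (llpo_mem_zero fun _ => rfl).1⟩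

lemma llpo_useq_even {i : ℕ} (he : i % 2 = 0) {y : Baire}
    (hy : y ∈ LLPO (useq i)) : y = cseq 1 := by
  rcases hy with ⟨-, ⟨rfl, h0⟩ | ⟨rfl, -⟩⟩
  · have := h0 i (Nat.even_iff.2 he)
    simp [useq] at this
  · rfl

lemma llpo_useq_odd {i : ℕ} (he : i % 2 = 1) {y : Baire}
    (hy : y ∈ LLPO (useq i)) : y = cseq 0 := by
  rcases hy with ⟨-, ⟨rfl, -⟩ | ⟨rfl, h0⟩⟩
  · rfl
  · have := h0 i (Nat.odd_iff.2 he)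
    simp [useq] at this

end Values
section Upper

open Set

/-- Identity with advice: `u ↦ {u}` provided the even part of `u` lies in `Dom q`. -/
def advId (q : Problem) : Problem := fun u => {v | v = u ∧ evenP u ∈ Dom q}

/-- `f` applied to the odd part. -/
def fOdd (f : Problem) : Problem := fun v => f (oddP v)

lemma wRed_advId (q f : Problem) : WRed (advId q) f → True := fun _ => trivial

lemma wRed_advId_self (q : Problem) : WRed (advId q) q := by
  refine ⟨evenP, evenP, computableOn_evenP _, computableOn_evenP _, ?_⟩
  rintro u ⟨v, rfl, hdom⟩
  refine ⟨hdom, fun y _ => ?_⟩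
  rw [evenP_pair]
  exact ⟨rfl, hdom⟩

lemma wRed_fOdd (f : Problem) : WRed (fOdd f) f := by
  refine ⟨oddP, oddP, computableOn_oddP _, computableOn_oddP _, ?_⟩
  intro u hu
  refine ⟨hu, fun z hz => ?_⟩
  rw [oddP_pair]
  exact hz

/-- The problem `u ↦ pair (evenP u) '' (g (oddP u))`. -/
def gAdv (g : Problem) : Problem := fun u => {v | ∃ y ∈ g (oddP u), v = pair (evenP u) y}

lemma primrec_r : Primrec (fun n => if n % 2 = 0 then 2 * n else n : ℕ → ℕ) := by
  apply Primrec.ite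
  · exact PrimrecRel.comp Primrec.eq
      (Primrec.nat_mod.comp Primrec.id (Primrec.const 2)) (Primrec.const 0)
  · exact Primrec.nat_double
  · exact Primrec.id

lemma wRed_gAdv (g : Problem) : WRed (gAdv g) g := by
  have heq : (fun w => pair (evenP (evenP w)) (oddP w))
      = fun (w : Baire) n => w (if n % 2 = 0 then 2 * n else n) := by
    funext w n
    by_cases h : n % 2 = 0
    · simp only [pair, evenP, oddP, h, if_true]
      congr 1
      omega
    · simp only [pair, evenP, oddP, h, if_false]
      congr 1
      omega
  refine ⟨fun w => pair (evenP (evenP w)) (oddP w), oddP, computableOn_oddP _, ?_, ?_⟩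
  · rw [heq]
    exact computableOn_reindex primrec_r _
  · intro u hu
    obtain ⟨v, y, hy, -⟩ := hu
    refine ⟨⟨y, hy⟩, fun y' hy' => ?_⟩
    show pair (evenP (evenP (pair u y'))) (oddP (pair u y')) ∈ gAdv g u
    rw [evenP_pair, oddP_pair]
    exact ⟨y', hy', rfl⟩

lemma pcomp_fOdd_advId {f g : Problem} {d : Baire} (hd : d ∈ Dom g) (x : Baire) :
    pcomp (fOdd f) (advId g) (pair d x) = f x := by
  have hadv : advId g (pair d x) = {pair d x} := by
    ext v
    simp only [advId, evenP_pair, Set.mem_setOf_eq, Set.mem_singleton_iff]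
    exact ⟨fun h => h.1, fun h => ⟨h, hd⟩⟩
  ext z
  simp only [pcomp, hadv, Set.mem_setOf_eq]
  constructor
  · rintro ⟨-, y, rfl, hz⟩
    rwa [fOdd, oddP_pair] at hz
  · intro hz
    refine ⟨?_, pair d x, rfl, ?_⟩
    · rintro v rfl
      show (f (oddP (pair d x))).Nonempty
      rw [oddP_pair]
      exact ⟨z, hz⟩
    · show z ∈ f (oddP (pair d x))
      rwa [oddP_pair]

lemma pcomp_advId_gAdv {f g : Problem} {e : Baire} (he : e ∈ Dom f) (x : Baire) :
    pcomp (advId f) (gAdv g) (pair e x) = {w | ∃ y ∈ g x, w = pair e y} := by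
  have hg : gAdv g (pair e x) = {v | ∃ y ∈ g x, v = pair e y} := by
    simp only [gAdv, evenP_pair, oddP_pair]
  ext w
  simp only [pcomp, hg, Set.mem_setOf_eq]
  constructor
  · rintro ⟨-, v, ⟨y, hy, rfl⟩, hw, -⟩
    exact ⟨y, hy, hw⟩
  · rintro ⟨y, hy, rfl⟩
    refine ⟨?_, pair e y, ⟨y, hy, rfl⟩, rfl, by rw [evenP_pair]; exact he⟩
    rintro v ⟨y', hy', rfl⟩
    exact ⟨pair e y', rfl, by rw [evenP_pair]; exact he⟩

lemma contWRed_left_upper {f g p T : Problem}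
    (hmax : ∀ f' g', WRed f' f → WRed g' g → WRed (pcomp f' g') p)
    (hpT : ContWRed p T) (hdg : (Dom g).Nonempty) : ContWRed f T := by
  obtain ⟨d, hd⟩ := hdg
  have hX : WRed (pcomp (fOdd f) (advId g)) p := hmax _ _ (wRed_fOdd f) (wRed_advId_self g)
  have hfX : ContWRed f (pcomp (fOdd f) (advId g)) := by
    refine ⟨oddP, fun x => pair d x, ?_, continuous_oddP.continuousOn, ?_⟩
    · exact (continuous_pairMap continuous_const continuous_id).continuousOn
    · intro x hx
      have hXval : pcomp (fOdd f) (advId g) (pair d x) = f x := pcomp_fOdd_advId hd x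
      constructor
      · show (pcomp (fOdd f) (advId g) (pair d x)).Nonempty
        rw [hXval]
        exact hx
      · intro z hz
        have hz' : z ∈ f x := hXval ▸ hz
        show oddP (pair x z) ∈ f x
        rw [oddP_pair]
        exact hz'
  exact contWRed_trans (contWRed_trans hfX (contWRed_of_wRed hX)) hpT

lemma contWRed_right_upper {f g p T : Problem}
    (hmax : ∀ f' g', WRed f' f → WRed g' g → WRed (pcomp f' g') p)
    (hpT : ContWRed p T) (hdf : (Dom f).Nonempty) : ContWRed g T := by
  obtain ⟨e, he⟩ := hdf
  have hY : WRed (pcomp (advId f) (gAdv g)) p := hmax _ _ (wRed_advId_self f) (wRed_gAdv g)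
  have hgY : ContWRed g (pcomp (advId f) (gAdv g)) := by
    refine ⟨fun v => oddP (oddP v), fun x => pair e x, ?_, ?_, ?_⟩
    · exact (continuous_pairMap continuous_const continuous_id).continuousOn
    · exact (continuous_oddP.comp continuous_oddP).continuousOn
    · intro x hx
      have hYval : pcomp (advId f) (gAdv g) (pair e x) = {w | ∃ y ∈ g x, w = pair e y} :=
        pcomp_advId_gAdv he x
      obtain ⟨y₀, hy₀⟩ := hx
      constructor
      · show (pcomp (advId f) (gAdv g) (pair e x)).Nonempty
        rw [hYval]
        exact ⟨pair e y₀, y₀, hy₀, rfl⟩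
      · intro w hw
        have hw' : w ∈ {w | ∃ y ∈ g x, w = pair e y} := hYval ▸ hw
        obtain ⟨y, hy, rfl⟩ := hw'
        show oddP (oddP (pair x (pair e y))) ∈ g x
        rw [oddP_pair, oddP_pair]
        exact hy
  exact contWRed_trans (contWRed_trans hgY (contWRed_of_wRed hY)) hpT

end Upper
section Selector

open Set

/-- Selector: map `x` to `sel j` where `j` is the least index with `φ (x j)`,
or to `lim` if there is no such index. -/
noncomputable def selFun (φ : ℕ → Prop) (sel : ℕ → Baire) (lim : Baire) (x : Baire) : Baire :=
  letI : DecidablePred fun n => φ (x n) := Classical.decPred _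
  letI : Decidable (∃ n, φ (x n)) := Classical.propDecidable _
  if hx : ∃ n, φ (x n) then sel (Nat.find hx) else lim

lemma selFun_eval_neg {φ : ℕ → Prop} {sel : ℕ → Baire} {lim : Baire} {x : Baire}
    (hx : ¬ ∃ n, φ (x n)) : selFun φ sel lim x = lim := by
  unfold selFun
  rw [dif_neg hx]

lemma selFun_eval_pos {φ : ℕ → Prop} {sel : ℕ → Baire} {lim : Baire} {x : Baire}
    {j : ℕ} (hmin : ∀ i < j, ¬ φ (x i)) (hj : φ (x j)) :
    selFun φ sel lim x = sel j := by
  classical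
  unfold selFun
  rw [dif_pos ⟨j, hj⟩]
  apply congrArg
  exact (Nat.find_eq_iff _).mpr ⟨hj, fun k hk => hmin k hk⟩

lemma exists_least {φ : ℕ → Prop} {x : Baire} (hx : ∃ n, φ (x n)) :
    ∃ j, (∀ i < j, ¬ φ (x i)) ∧ φ (x j) := by
  classical
  exact ⟨Nat.find hx, fun i hi => Nat.find_min hx hi, Nat.find_spec hx⟩

lemma selector_continuous (φ : ℕ → Prop) (sel : ℕ → Baire) (lim : Baire)
    (hclose : ∀ j, ∀ i < j, sel j i = lim i) :
    Continuous (selFun φ sel lim) := by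
  classical
  rw [← continuousOn_univ]
  intro x _
  apply continuousWithinAt_of_cyl
  intro m
  by_cases hx : ∃ n, φ (x n)
  · obtain ⟨j, hmin, hj⟩ := exists_least hx
    refine ⟨j + 1, fun x' _ hx' i _ => ?_⟩
    have h1 : selFun φ sel lim x' = sel j := by
      refine selFun_eval_pos (fun i hi => ?_) ?_
      · rw [hx' i (by omega)]; exact hmin i hi
      · rw [hx' j (by omega)]; exact hj
    have h2 : selFun φ sel lim x = sel j := selFun_eval_pos hmin hj
    rw [h1, h2]
  · refine ⟨m, fun x' _ hx' i hi => ?_⟩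
    rw [selFun_eval_neg hx]
    by_cases h1 : ∃ n, φ (x' n)
    · obtain ⟨j', hmin', hj'⟩ := exists_least h1
      have hge : m ≤ j' := by
        by_contra hlt
        push_neg at hlt
        rw [hx' j' hlt] at hj'
        exact hx ⟨j', hj'⟩
      rw [selFun_eval_pos hmin' hj']
      exact hclose j' i (lt_of_lt_of_le hi hge)
    · rw [selFun_eval_neg h1]

end Selector

section SplitLPO

open Set

/-- LPO test instance: 1 everywhere except a 0 at position `s`. -/
def zseq (s : ℕ) : Baire := fun n => if n = s then 0 else 1

lemma zseq_zero (s : ℕ) : zseq s s = 0 := by simp [zseq]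

lemma zseq_ne {s n : ℕ} (h : n ≠ s) : zseq s n = 1 := by simp [zseq, h]

/-- The backward map answering the LPO question about the even part. -/
noncomputable def lpoAns (w : Baire) : Baire :=
  letI := Classical.propDecidable (∃ n, w (2 * n) = 0)
  if ∃ n, w (2 * n) = 0 then cseq 0 else cseq 1

lemma lpoAns_pos {w : Baire} {n : ℕ} (h : w (2 * n) = 0) : lpoAns w = cseq 0 := by
  unfold lpoAns
  rw [if_pos ⟨n, h⟩]

lemma lpoAns_neg {w : Baire} (h : ∀ n, w (2 * n) ≠ 0) : lpoAns w = cseq 1 := by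
  unfold lpoAns
  rw [if_neg]
  rintro ⟨n, hn⟩
  exact h n hn

/-- Splitting lemma for LPO: if LPO continuously reduces to a composition,
it continuously reduces to one of the factors. -/
lemma lpo_split (F G : Problem) (hred : ContWRed LPO (pcomp F G)) :
    ContWRed LPO F ∨ ContWRed LPO G := by
  classical
  obtain ⟨h, k, hk, hh, hcond⟩ := hred
  have hsub : ∀ x : Baire, G (k x) ⊆ Dom F ∧ (G (k x)).Nonempty := by
    intro x
    obtain ⟨z, hz⟩ := (hcond x (mem_dom_lpo x)).1
    obtain ⟨hz1, y, hy, -⟩ := hz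
    exact ⟨hz1, ⟨y, hy⟩⟩
  have hmemp : ∀ (q : Baire) {y z : Baire}, y ∈ G (k q) → z ∈ F y →
      z ∈ pcomp F G (k q) := by
    intro q y z hy hz
    exact ⟨(hsub q).1, y, hy, hz⟩
  by_cases M : ∃ yinf ∈ G (k (cseq 1)), ∀ N : ℕ, ∃ s, N ≤ s ∧
      ∃ y ∈ G (k (zseq s)), initSeg y N = initSeg yinf N
  · -- merging: LPO reduces to F
    left
    obtain ⟨yinf, hyinf, hap⟩ := M
    choose s hs yy hyG hmatch using hap
    set kF := selFun (· = 0) yy yinf with hkF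
    set ψ := selFun (· = 0) (fun j => zseq (s j)) (cseq 1) with hψ
    have hkFc : Continuous kF := by
      apply selector_continuous
      intro j i hi
      have := hmatch j
      rw [initSeg_eq_iff] at this
      exact this i hi
    have hψc : Continuous ψ := by
      apply selector_continuous
      intro j i hi
      have h1 : i ≠ s j := by
        have := hs j
        omega
      rw [zseq_ne h1]
      rfl
    -- evaluation of kF and ψ together
    have heval : ∀ x : Baire, (∃ n, x n = 0) →
        ∃ j, x j = 0 ∧ kF x = yy j ∧ ψ x = zseq (s j) := by
      intro x hx
      obtain ⟨j, hmin, hj⟩ := exists_least (φ := (· = 0)) hx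
      exact ⟨j, hj, selFun_eval_pos hmin hj, selFun_eval_pos hmin hj⟩
    have hevaln : ∀ x : Baire, (¬ ∃ n, x n = 0) → kF x = yinf ∧ ψ x = cseq 1 :=
      fun x hx => ⟨selFun_eval_neg hx, selFun_eval_neg hx⟩
    refine ⟨fun w => h (pair (ψ (evenP w)) (oddP w)), kF, ?_, ?_, ?_⟩
    · exact hkFc.continuousOn
    · -- continuity of the backward map
      have hT : Continuous (fun w => pair (ψ (evenP w)) (oddP w)) :=
        continuous_pairMap (hψc.comp continuous_evenP) continuous_oddP
      apply hh.comp hT.continuousOn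
      rintro w ⟨x, hx, z, hz, rfl⟩
      simp only [evenP_pair, oddP_pair]
      refine ⟨ψ x, mem_dom_lpo _, z, ?_, rfl⟩
      by_cases hx0 : ∃ n, x n = 0
      · obtain ⟨j, -, hkFx, hψx⟩ := heval x hx0
        rw [hψx]
        rw [hkFx] at hz
        exact hmemp _ (hyG j) hz
      · obtain ⟨hkFx, hψx⟩ := hevaln x hx0
        rw [hψx]
        rw [hkFx] at hz
        exact hmemp _ hyinf hz
    · intro x hx
      constructor
      · -- kF x ∈ Dom F
        by_cases hx0 : ∃ n, x n = 0
        · obtain ⟨j, -, hkFx, -⟩ := heval x hx0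
          rw [hkFx]
          exact (hsub (zseq (s j))).1 (hyG j)
        · rw [(hevaln x hx0).1]
          exact (hsub (cseq 1)).1 hyinf
      · intro z hz
        simp only [evenP_pair, oddP_pair]
        by_cases hx0 : ∃ n, x n = 0
        · obtain ⟨j, hj0, hkFx, hψx⟩ := heval x hx0
          rw [hψx]
          rw [hkFx] at hz
          have hzp : z ∈ pcomp F G (k (zseq (s j))) := hmemp _ (hyG j) hz
          have hval := (hcond (zseq (s j)) (mem_dom_lpo _)).2 z hzp
          have : h (pair (zseq (s j)) z) = cseq 0 := lpo_eq_of_zero (zseq_zero (s j)) hval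
          rw [this]
          exact lpo_mem_of_zero hj0
        · obtain ⟨hkFx, hψx⟩ := hevaln x hx0
          rw [hψx]
          rw [hkFx] at hz
          have hzp : z ∈ pcomp F G (k (cseq 1)) := hmemp _ hyinf hz
          have hval := (hcond (cseq 1) (mem_dom_lpo _)).2 z hzp
          have h1 : h (pair (cseq 1) z) = cseq 1 :=
            lpo_eq_of_nozero (fun n => one_ne_zero) hval
          rw [h1]
          push_neg at hx0
          exact lpo_mem_of_nozero hx0
  · -- no merging: LPO reduces to G
    right
    push_neg at M
    set ψ₀ := selFun (· = 0) zseq (cseq 1) with hψ₀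
    have hψ₀c : Continuous ψ₀ := by
      apply selector_continuous
      intro j i hi
      rw [zseq_ne (by omega)]
      rfl
    have heval : ∀ x : Baire, (∃ n, x n = 0) →
        ∃ j, x j = 0 ∧ ψ₀ x = zseq j := by
      intro x hx
      obtain ⟨j, hmin, hj⟩ := exists_least (φ := (· = 0)) hx
      exact ⟨j, hj, selFun_eval_pos hmin hj⟩
    refine ⟨lpoAns, fun x => k (ψ₀ x), ?_, ?_, ?_⟩
    · have hk' : ContinuousOn k Set.univ := by rw [dom_lpo] at hk; exact hk
      exact hk'.comp hψ₀c.continuousOn fun x _ => Set.mem_univ _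
    · -- continuity of lpoAns on the solution set
      intro w₀ hw₀
      obtain ⟨x, -, y, hy, rfl⟩ := hw₀
      apply continuousWithinAt_of_cyl
      intro m
      by_cases hx0 : ∃ n, x n = 0
      · obtain ⟨j, hj0, -⟩ := heval x hx0
        refine ⟨2 * j + 1, fun w' _ hw' i _ => ?_⟩
        have h1 : w' (2 * j) = 0 := by
          rw [hw' (2 * j) (by omega)]
          rw [pair_even]
          exact hj0
        have h2 : (pair x y) (2 * j) = 0 := by rw [pair_even]; exact hj0
        rw [lpoAns_pos h1, lpoAns_pos h2]
      · -- no zero in x: use the non-merging hypothesis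
        obtain ⟨N, hN⟩ := M y (by
          have hy1 : y ∈ G (k (ψ₀ x)) := hy
          have h2 : ψ₀ x = cseq 1 := selFun_eval_neg hx0
          rwa [h2] at hy1)
        refine ⟨2 * N + 2, fun w' hw'S hw' i _ => ?_⟩
        obtain ⟨x', -, y', hy', rfl⟩ := hw'S
        have hxx : ∀ i ≤ N, x' i = x i := by
          intro i hi
          have := hw' (2 * i) (by omega)
          rwa [pair_even, pair_even] at this
        have hyy : ∀ i < N, y' i = y i := by
          intro i hi
          have := hw' (2 * i + 1) (by omega)
          rwa [pair_odd, pair_odd] at this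
        have hx'0 : ¬ ∃ n, x' n = 0 := by
          rintro ⟨n, hn⟩
          obtain ⟨j', hj'0, hψ₀x'⟩ := heval x' ⟨n, hn⟩
          have hj'N : N ≤ j' := by
            by_contra hlt
            push_neg at hlt
            rw [hxx j' (by omega)] at hj'0
            exact hx0 ⟨j', hj'0⟩
          have hmem : y' ∈ G (k (zseq j')) := by
            have hy'1 : y' ∈ G (k (ψ₀ x')) := hy'
            rwa [hψ₀x'] at hy'1
          refine hN j' hj'N y' hmem ?_
          rw [initSeg_eq_iff]
          exact hyy
        have hA : lpoAns (pair x' y') = cseq 1 := by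
          apply lpoAns_neg
          intro n
          rw [pair_even]
          exact fun hc => hx'0 ⟨n, hc⟩
        have hB : lpoAns (pair x y) = cseq 1 := by
          apply lpoAns_neg
          intro n
          rw [pair_even]
          exact fun hc => hx0 ⟨n, hc⟩
        rw [hA, hB]
    · intro x hx
      constructor
      · exact (hsub (ψ₀ x)).2
      · intro y hy
        by_cases hx0 : ∃ n, x n = 0
        · obtain ⟨j, hj0, -⟩ := heval x hx0
          have : lpoAns (pair x y) = cseq 0 := by
            apply lpoAns_pos (n := j)
            rw [pair_even]
            exact hj0
          rw [this]
          exact lpo_mem_of_zero hj0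
        · have : lpoAns (pair x y) = cseq 1 := by
            apply lpoAns_neg
            intro n
            rw [pair_even]
            exact fun hc => hx0 ⟨n, hc⟩
          rw [this]
          push_neg at hx0
          exact lpo_mem_of_nozero hx0

end SplitLPO
section SplitLLPO

open Set

lemma useq_lt {j i : ℕ} (h : i < j) : useq j i = 0 := by
  simp [useq]; omega

/-- Splitting lemma for LLPO. -/
lemma llpo_split (F G : Problem) (hred : ContWRed LLPO (pcomp F G)) :
    ContWRed LLPO F ∨ ContWRed LLPO G := by
  classical
  obtain ⟨h, k, hk, hh, hcond⟩ := hred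
  have hsub : ∀ q ∈ Dom LLPO, G (k q) ⊆ Dom F ∧ (G (k q)).Nonempty := by
    intro q hq
    obtain ⟨z, hz⟩ := (hcond q hq).1
    obtain ⟨hz1, y, hy, -⟩ := hz
    exact ⟨hz1, ⟨y, hy⟩⟩
  have hmemp : ∀ q ∈ Dom LLPO, ∀ {y z : Baire}, y ∈ G (k q) → z ∈ F y →
      z ∈ pcomp F G (k q) := by
    intro q hq y z hy hz
    exact ⟨(hsub q hq).1, y, hy, hz⟩
  by_cases M : ∃ yinf ∈ G (k (cseq 0)), ∀ N : ℕ,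
      (∃ i, N ≤ i ∧ i % 2 = 0 ∧ ∃ y ∈ G (k (useq i)), initSeg y N = initSeg yinf N) ∧
      (∃ i, N ≤ i ∧ i % 2 = 1 ∧ ∃ y ∈ G (k (useq i)), initSeg y N = initSeg yinf N)
  · -- two-sided merging: LLPO reduces to F
    left
    obtain ⟨yinf, hyinf, hap⟩ := M
    choose i0 hi0 hp0 y0 hy0 hm0 using fun N => (hap N).1
    choose i1 hi1 hp1 y1 hy1 hm1 using fun N => (hap N).2
    set II : ℕ → ℕ := fun j => if j % 2 = 0 then i0 j else i1 j with hIIdef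
    set YY : ℕ → Baire := fun j => if j % 2 = 0 then y0 j else y1 j with hYYdef
    have hIIeven : ∀ j, j % 2 = 0 → II j = i0 j := by
      intro j hj
      simp only [hIIdef, hj, if_true]
    have hIIodd : ∀ j, j % 2 ≠ 0 → II j = i1 j := by
      intro j hj
      simp only [hIIdef, hj, if_false]
    have hYYeven : ∀ j, j % 2 = 0 → YY j = y0 j := by
      intro j hj
      simp only [hYYdef, hj, if_true]
    have hYYodd : ∀ j, j % 2 ≠ 0 → YY j = y1 j := by
      intro j hj
      simp only [hYYdef, hj, if_false]
    have hIIj : ∀ j, j ≤ II j ∧ II j % 2 = j % 2 := by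
      intro j
      by_cases hj : j % 2 = 0
      · rw [hIIeven j hj, hj]
        exact ⟨hi0 j, hp0 j⟩
      · have hj1 : j % 2 = 1 := by omega
        rw [hIIodd j hj, hj1]
        exact ⟨hi1 j, hp1 j⟩
    have hYYmem : ∀ j, YY j ∈ G (k (useq (II j))) := by
      intro j
      by_cases hj : j % 2 = 0
      · rw [hIIeven j hj, hYYeven j hj]
        exact hy0 j
      · rw [hIIodd j hj, hYYodd j hj]
        exact hy1 j
    have hYYm : ∀ j, initSeg (YY j) j = initSeg yinf j := by
      intro j
      by_cases hj : j % 2 = 0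
      · rw [hYYeven j hj]
        exact hm0 j
      · rw [hYYodd j hj]
        exact hm1 j
    set kF := selFun (· ≠ 0) YY yinf with hkF
    set ψ := selFun (· ≠ 0) (fun j => useq (II j)) (cseq 0) with hψ
    have hkFc : Continuous kF := by
      apply selector_continuous
      intro j i hi
      have := hYYm j
      rw [initSeg_eq_iff] at this
      exact this i hi
    have hψc : Continuous ψ := by
      apply selector_continuous
      intro j i hi
      rw [useq_lt (lt_of_lt_of_le hi (hIIj j).1)]
      rfl
    have heval : ∀ x : Baire, (∃ n, x n ≠ 0) →
        ∃ j, x j ≠ 0 ∧ kF x = YY j ∧ ψ x = useq (II j) := by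
      intro x hx
      obtain ⟨j, hmin, hj⟩ := exists_least (φ := (· ≠ 0)) hx
      exact ⟨j, hj, selFun_eval_pos hmin hj, selFun_eval_pos hmin hj⟩
    have hevaln : ∀ x : Baire, (¬ ∃ n, x n ≠ 0) → kF x = yinf ∧ ψ x = cseq 0 :=
      fun x hx => ⟨selFun_eval_neg hx, selFun_eval_neg hx⟩
    have hxzero : ∀ x : Baire, (¬ ∃ n, x n ≠ 0) → x = cseq 0 := by
      intro x hx
      push_neg at hx
      funext n
      exact hx n
    refine ⟨fun w => h (pair (ψ (evenP w)) (oddP w)), kF, ?_, ?_, ?_⟩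
    · exact hkFc.continuousOn
    · have hT : Continuous (fun w => pair (ψ (evenP w)) (oddP w)) :=
        continuous_pairMap (hψc.comp continuous_evenP) continuous_oddP
      apply hh.comp hT.continuousOn
      rintro w ⟨x, hx, z, hz, rfl⟩
      simp only [evenP_pair, oddP_pair]
      by_cases hx0 : ∃ n, x n ≠ 0
      · obtain ⟨j, -, hkFx, hψx⟩ := heval x hx0
        rw [hψx]
        rw [hkFx] at hz
        exact ⟨useq (II j), useq_mem_dom _, z,
          hmemp _ (useq_mem_dom _) (hYYmem j) hz, rfl⟩
      · obtain ⟨hkFx, hψx⟩ := hevaln x hx0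
        rw [hψx]
        rw [hkFx] at hz
        exact ⟨cseq 0, cseq0_mem_dom, z, hmemp _ cseq0_mem_dom hyinf hz, rfl⟩
    · intro x hx
      constructor
      · by_cases hx0 : ∃ n, x n ≠ 0
        · obtain ⟨j, -, hkFx, -⟩ := heval x hx0
          rw [hkFx]
          exact (hsub (useq (II j)) (useq_mem_dom _)).1 (hYYmem j)
        · rw [(hevaln x hx0).1]
          exact (hsub (cseq 0) cseq0_mem_dom).1 hyinf
      · intro z hz
        simp only [evenP_pair, oddP_pair]
        by_cases hx0 : ∃ n, x n ≠ 0
        · obtain ⟨j, hj0, hkFx, hψx⟩ := heval x hx0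
          rw [hψx]
          rw [hkFx] at hz
          have hzp : z ∈ pcomp F G (k (useq (II j))) :=
            hmemp _ (useq_mem_dom _) (hYYmem j) hz
          have hval := (hcond (useq (II j)) (useq_mem_dom _)).2 z hzp
          by_cases hj : j % 2 = 0
          · have hpar : II j % 2 = 0 := by rw [(hIIj j).2, hj]
            rw [llpo_useq_even hpar hval]
            exact llpo_mem_even (llpo_amo hx) hj0 hj
          · have hj1 : j % 2 = 1 := by omega
            have hpar : II j % 2 = 1 := by rw [(hIIj j).2, hj1]
            rw [llpo_useq_odd hpar hval]
            exact llpo_mem_odd (llpo_amo hx) hj0 hj1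
        · obtain ⟨hkFx, hψx⟩ := hevaln x hx0
          rw [hψx]
          rw [hkFx] at hz
          have hzp : z ∈ pcomp F G (k (cseq 0)) := hmemp _ cseq0_mem_dom hyinf hz
          have hval := (hcond (cseq 0) cseq0_mem_dom).2 z hzp
          rw [hxzero x hx0]
          exact hval
  · -- no common merging point: LLPO reduces to G
    right
    -- the avoidance predicate
    set P : ℕ → Baire → ℕ → Prop := fun b y m =>
      ∀ i, m ≤ i → i % 2 = b → ∀ y' ∈ G (k (useq i)), initSeg y' m ≠ initSeg y m
      with hPdef
    have hPdep : ∀ {b y y' m}, initSeg y' m = initSeg y m → P b y m → P b y' m := by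
      intro b y y' m heq hP i hi hp y'' hy'' heq2
      exact hP i hi hp y'' hy'' (heq2.trans heq)
    have hPmin : ∀ {b y m m'}, P b y m → m ≤ m' → P b y m' := by
      intro b y m m' hP hle i hi hp y' hy' heq
      exact hP i (le_trans hle hi) hp y' hy' (initSeg_eq_of_le heq hle)
    have hM : ∀ y ∈ G (k (cseq 0)), ∃ m, P 0 y m ∨ P 1 y m := by
      intro y hy
      by_contra hcon
      push_neg at hcon
      apply M
      refine ⟨y, hy, fun N => ⟨?_, ?_⟩⟩
      · have h0 := (hcon N).1
        simp only [hPdef] at h0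
        push_neg at h0
        obtain ⟨i, hi, hp, y', hy', heq⟩ := h0
        exact ⟨i, hi, hp, y', hy', heq⟩
      · have h1 := (hcon N).2
        simp only [hPdef] at h1
        push_neg at h1
        obtain ⟨i, hi, hp, y', hy', heq⟩ := h1
        exact ⟨i, hi, hp, y', hy', heq⟩
    set R : Baire → Prop := fun y => ∃ m, P 0 y m ∨ P 1 y m with hRdef
    set v : Baire → Baire := fun y =>
      if hy : R y then (if P 0 y (Nat.find hy) then cseq 0 else cseq 1) else cseq 0
      with hvdef
    have hv01 : ∀ y, v y = cseq 0 ∨ v y = cseq 1 := by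
      intro y
      simp only [hvdef]
      by_cases hy : R y
      · rw [dif_pos hy]
        by_cases h0 : P 0 y (Nat.find hy)
        · rw [if_pos h0]; exact Or.inl rfl
        · rw [if_neg h0]; exact Or.inr rfl
      · rw [dif_neg hy]; exact Or.inl rfl
    -- transfer of v along long enough agreement
    have hvagree : ∀ y (hy : R y) y', initSeg y' (Nat.find hy) = initSeg y (Nat.find hy) →
        v y' = v y := by
      intro y hy y' heq
      have hRy' : R y' := by
        obtain h0 | h1 := Nat.find_spec hy
        · exact ⟨Nat.find hy, Or.inl (hPdep heq h0)⟩
        · exact ⟨Nat.find hy, Or.inr (hPdep heq h1)⟩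
      have hfind : Nat.find hRy' = Nat.find hy := by
        rw [Nat.find_eq_iff]
        constructor
        · obtain h0 | h1 := Nat.find_spec hy
          · exact Or.inl (hPdep heq h0)
          · exact Or.inr (hPdep heq h1)
        · intro n hn hcon
          have heqn : initSeg y (Nat.find hy) = initSeg y' (Nat.find hy) := heq.symm
          have heqn' : initSeg y n = initSeg y' n := initSeg_eq_of_le heqn (le_of_lt hn)
          apply Nat.find_min hy hn
          obtain h0 | h1 := hcon
          · exact Or.inl (hPdep heqn' h0)
          · exact Or.inr (hPdep heqn' h1)
      have hbranch : P 0 y' (Nat.find hRy') ↔ P 0 y (Nat.find hy) := by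
        rw [hfind]
        constructor
        · intro hp
          exact hPdep heq.symm hp
        · intro hp
          exact hPdep heq hp
      simp only [hvdef, dif_pos hRy', dif_pos hy]
      by_cases h0 : P 0 y (Nat.find hy)
      · rw [if_pos h0, if_pos (hbranch.mpr h0)]
      · rw [if_neg h0, if_neg (fun hc => h0 (hbranch.mp hc))]
    set ψ₀ := selFun (· ≠ 0) useq (cseq 0) with hψ₀
    have hψ₀c : Continuous ψ₀ := by
      apply selector_continuous
      intro j i hi
      rw [useq_lt hi]
      rfl
    have heval : ∀ x : Baire, (∃ n, x n ≠ 0) → ∃ j, x j ≠ 0 ∧ (∀ i < j, x i = 0) ∧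
        ψ₀ x = useq j := by
      intro x hx
      obtain ⟨j, hmin, hj⟩ := exists_least (φ := (· ≠ 0)) hx
      refine ⟨j, hj, fun i hi => ?_, selFun_eval_pos hmin hj⟩
      by_contra hc
      exact hmin i hi hc
    have hψ₀dom : ∀ x, ψ₀ x ∈ Dom LLPO := by
      intro x
      by_cases hx : ∃ n, x n ≠ 0
      · obtain ⟨j, -, -, hev⟩ := heval x hx
        rw [hev]
        exact useq_mem_dom j
      · have h2 : ψ₀ x = cseq 0 := selFun_eval_neg hx
        rw [h2]
        exact cseq0_mem_dom
    -- the backward map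
    set ans : ℕ → Baire := fun j => if j % 2 = 0 then cseq 1 else cseq 0 with hansdef
    set hG : Baire → Baire := fun w => selFun (· ≠ 0) ans (v (oddP w)) (evenP w) with hGdef
    have hGpos : ∀ w (j : ℕ), evenP w j ≠ 0 → (∀ i < j, evenP w i = 0) →
        hG w = ans j := by
      intro w j hj hmin
      simp only [hGdef]
      exact selFun_eval_pos (fun i hi hc => by exact hc (hmin i hi)) hj
    have hGneg : ∀ w, (¬ ∃ n, evenP w n ≠ 0) → hG w = v (oddP w) := by
      intro w hw
      simp only [hGdef]
      exact selFun_eval_neg hw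
    refine ⟨hG, fun x => k (ψ₀ x), ?_, ?_, ?_⟩
    · exact hk.comp hψ₀c.continuousOn fun x _ => hψ₀dom x
    · -- continuity of hG on the solution set
      intro w₀ hw₀
      obtain ⟨x, hxdom, y, hy, rfl⟩ := hw₀
      have hy' : y ∈ G (k (ψ₀ x)) := hy
      apply continuousWithinAt_of_cyl
      intro m
      by_cases hx0 : ∃ n, x n ≠ 0
      · obtain ⟨j, hj0, hjmin, -⟩ := heval x hx0
        refine ⟨2 * j + 2, fun w' _ hw' i _ => ?_⟩
        have hxa : ∀ i ≤ j, evenP w' i = x i := by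
          intro i hi
          show w' (2 * i) = x i
          rw [hw' (2 * i) (by omega), pair_even]
        have h1 : hG w' = ans j := by
          apply hGpos w' j
          · rw [hxa j (le_refl j)]; exact hj0
          · intro i hi
            rw [hxa i (by omega)]
            exact hjmin i hi
        have h2 : hG (pair x y) = ans j := by
          apply hGpos _ j
          · rw [evenP_pair]; exact hj0
          · intro i hi
            rw [evenP_pair]
            exact hjmin i hi
        rw [h1, h2]
      · -- all-zero instance
        have hyG0 : y ∈ G (k (cseq 0)) := by
          have h2 : ψ₀ x = cseq 0 := selFun_eval_neg hx0
          rwa [h2] at hy'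
        have hRy : R y := hM y hyG0
        set ms := Nat.find hRy with hmsdef
        have hb : P 0 y ms ∨ P 1 y ms := Nat.find_spec hRy
        refine ⟨2 * ms + 2, fun w' hw'S hw' i _ => ?_⟩
        obtain ⟨x', hx'dom, y'', hy'', rfl⟩ := hw'S
        have hy''2 : y'' ∈ G (k (ψ₀ x')) := hy''
        have hxa : ∀ i ≤ ms, x' i = x i := by
          intro i hi
          have := hw' (2 * i) (by omega)
          rwa [pair_even, pair_even] at this
        have hya : initSeg y'' ms = initSeg y ms := by
          rw [initSeg_eq_iff]
          intro i hi
          have := hw' (2 * i + 1) (by omega)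
          rwa [pair_odd, pair_odd] at this
        have hgw0 : hG (pair x y) = v y := by
          rw [hGneg]
          · rw [oddP_pair]
          · rw [evenP_pair]
            exact hx0
        rw [hgw0]
        by_cases hx'0 : ∃ n, x' n ≠ 0
        · obtain ⟨j', hj'0, hj'min, hev'⟩ := heval x' hx'0
          have hj'ms : ms ≤ j' := by
            by_contra hlt
            push_neg at hlt
            rw [hxa j' (by omega)] at hj'0
            exact hx0 ⟨j', hj'0⟩
          have hy''G : y'' ∈ G (k (useq j')) := by rwa [hev'] at hy''2
          -- the parity of j' must dodge the avoided parity
          have h1 : hG (pair x' y'') = ans j' := by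
            apply hGpos _ j'
            · rw [evenP_pair]; exact hj'0
            · intro i hi
              rw [evenP_pair]
              exact hj'min i hi
          rw [h1]
          obtain h0 | hP1 := hb
          · -- parity 0 avoided near y, so j' is odd and v y = cseq 0
            have hj'par : j' % 2 = 1 := by
              by_contra hc
              have hc0 : j' % 2 = 0 := by omega
              exact h0 j' hj'ms hc0 y'' hy''G hya
            have hansj' : ans j' = cseq 0 := by
              simp only [hansdef, hj'par]
              norm_num
            have hvy : v y = cseq 0 := by
              simp only [hvdef, dif_pos hRy]
              rw [if_pos (show P 0 y (Nat.find hRy) by rw [← hmsdef]; exact h0)]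
            rw [hansj', hvy]
          · -- parity 1 avoided near y
            by_cases h0' : P 0 y ms
            · -- both avoided: then no nonzero x' is possible at all parities... but
              by_cases hj'par : j' % 2 = 0
              · exact absurd (h0' j' hj'ms hj'par y'' hy''G hya) (fun hc => hc)
              · exact absurd (hP1 j' hj'ms (by omega) y'' hy''G hya) (fun hc => hc)
            · have hj'par : j' % 2 = 0 := by
                by_contra hc
                exact hP1 j' hj'ms (by omega) y'' hy''G hya
              have hansj' : ans j' = cseq 1 := by
                simp only [hansdef, hj'par]
                norm_num
              have hvy : v y = cseq 1 := by
                simp only [hvdef, dif_pos hRy]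
                rw [if_neg (show ¬ P 0 y (Nat.find hRy) by rw [← hmsdef]; exact h0')]
              rw [hansj', hvy]
        · -- x' also all zero: transfer v
          have h1 : hG (pair x' y'') = v y'' := by
            rw [hGneg]
            · rw [oddP_pair]
            · rw [evenP_pair]
              exact hx'0
          rw [h1]
          rw [hvagree y hRy y'' hya]
    · intro x hxdom
      constructor
      · exact (hsub (ψ₀ x) (hψ₀dom x)).2
      · intro y hy
        have hy' : y ∈ G (k (ψ₀ x)) := hy
        by_cases hx0 : ∃ n, x n ≠ 0
        · obtain ⟨j, hj0, hjmin, -⟩ := heval x hx0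
          have h1 : hG (pair x y) = ans j := by
            apply hGpos _ j
            · rw [evenP_pair]; exact hj0
            · intro i hi
              rw [evenP_pair]
              exact hjmin i hi
          rw [h1]
          by_cases hj : j % 2 = 0
          · have : ans j = cseq 1 := by simp only [hansdef, hj]; norm_num
            rw [this]
            exact llpo_mem_even (llpo_amo hxdom) hj0 hj
          · have hj1 : j % 2 = 1 := by omega
            have : ans j = cseq 0 := by simp only [hansdef, hj1]; norm_num
            rw [this]
            exact llpo_mem_odd (llpo_amo hxdom) hj0 hj1
        · have h1 : hG (pair x y) = v y := by
            rw [hGneg]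
            · rw [oddP_pair]
            · rw [evenP_pair]
              exact hx0
          rw [h1]
          have hz : ∀ n, x n = 0 := by
            push_neg at hx0
            exact hx0
          obtain hv0 | hv1 := hv01 y
          · rw [hv0]
            exact (llpo_mem_zero hz).1
          · rw [hv1]
            exact (llpo_mem_zero hz).2

end SplitLLPO
section Main

open Set

lemma doms_nonempty {T f g f0 g0 : Problem} (x0 : Baire) (hx0 : x0 ∈ Dom T)
    (hT : ContWRed T (pcomp f0 g0)) (hf0 : WRed f0 f) (hg0 : WRed g0 g) :
    (Dom f).Nonempty ∧ (Dom g).Nonempty := by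
  obtain ⟨h, k, -, -, hc⟩ := hT
  obtain ⟨z, hz1, y, hy, -⟩ := (hc x0 hx0).1
  obtain ⟨hf', kf', -, -, hcf⟩ := hf0
  obtain ⟨hg', kg', -, -, hcg⟩ := hg0
  have hyf : y ∈ Dom f0 := hz1 hy
  have hkg : k x0 ∈ Dom g0 := ⟨y, hy⟩
  exact ⟨⟨kf' y, (hcf y hyf).1⟩, ⟨kg' (k x0), (hcg (k x0) hkg).1⟩⟩

lemma star_irred_of_split {Q : Problem} (x0 : Baire) (hx0 : x0 ∈ Dom Q)
    (hsplit : ∀ F G : Problem, ContWRed Q (pcomp F G) → ContWRed Q F ∨ ContWRed Q G)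
    (f g p : Problem) (hcp : IsCompProd f g p) (heq : ContWEquiv Q p) :
    ContWEquiv Q f ∨ ContWEquiv Q g := by
  obtain ⟨⟨f0, g0, hf0, hg0, hpe⟩, hmax⟩ := hcp
  obtain ⟨hQp, hpQ⟩ := heq
  have hppc : ContWRed p (pcomp f0 g0) := contWRed_of_wRed hpe.1
  have hQpc : ContWRed Q (pcomp f0 g0) := contWRed_trans hQp hppc
  obtain ⟨hdf, hdg⟩ := doms_nonempty x0 hx0 hQpc hf0 hg0
  rcases hsplit f0 g0 hQpc with hF | hG
  · exact Or.inl ⟨contWRed_trans hF (contWRed_of_wRed hf0),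
      contWRed_left_upper hmax hpQ hdg⟩
  · exact Or.inr ⟨contWRed_trans hG (contWRed_of_wRed hg0),
      contWRed_right_upper hmax hpQ hdf⟩

end Main

/-- `LPO` and `LLPO` are `*`-irreducible with respect to continuous Weihrauch degrees. -/
theorem lpo_llpo_star_irreducible :
    (∀ f g p : Problem, IsCompProd f g p → ContWEquiv LPO p →
      ContWEquiv LPO f ∨ ContWEquiv LPO g) ∧
    (∀ f g p : Problem, IsCompProd f g p → ContWEquiv LLPO p →
      ContWEquiv LLPO f ∨ ContWEquiv LLPO g) := by
  constructor
  · exact fun f g p hcp heq =>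
      star_irred_of_split (cseq 1) (mem_dom_lpo _) lpo_split f g p hcp heq
  · exact fun f g p hcp heq =>
      star_irred_of_split (cseq 0) cseq0_mem_dom llpo_split f g p hcp heq
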